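/- Let f ∈ F_q[x] be a monic polynomial of degree t ≥ 2 with nonzero constant term, and let γ = |{β ∈ F_q : f(β) ≠ 0}|. Then the Generalized RUNS matrix M(f) — whose rows are indexed by the q^t sequences in G(f) grouped by orbits under the shift, with block 0 having columns the first t shifts L^{j−1}s and block k (for the k-th element β_k with f(β_k) ≠ 0) having columns (L − β_k)^{−j} s for j = 1,…,t — is an ordered orthogonal array OOA(q^t; t, γ+1, t, q): every left-justified set of t columns is 1-covered. -/

import Mathlib

noncomputable section
namespace Stmt13Aux
open Polynomial

variable {F : Type*} [Field F]

variable (t : ℕ) (b : ℕ → F) in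
def fp : F[X] := ∑ i ∈ Finset.range (t+1), C (b i) * X ^ i

variable {t : ℕ} {b : ℕ → F}

lemma fp_coeff (k : ℕ) : (fp t b).coeff k = if k < t + 1 then b k else 0 := by
  classical
  simp only [fp, finset_sum_coeff, coeff_C_mul, coeff_X_pow, mul_ite, mul_one, mul_zero,
    Finset.sum_ite_eq, Finset.mem_range]

lemma fp_eval (β : F) : eval β (fp t b) = ∑ i ∈ Finset.range (t+1), b i * β ^ i := by
  simp [fp, eval_finset_sum]

lemma fp_natDegree_le : (fp t b).natDegree ≤ t := by
  refine natDegree_sum_le_of_forall_le _ _ (fun i hi => ?_)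
  exact le_trans (natDegree_C_mul_X_pow_le _ _) (Nat.lt_succ_iff.mp (Finset.mem_range.mp hi))

lemma fp_monic (hm : b t = 1) : (fp t b).Monic := by
  refine monic_of_natDegree_le_of_coeff_eq_one t fp_natDegree_le ?_
  rw [fp_coeff]; simp [hm]

lemma fp_natDegree (hm : b t = 1) : (fp t b).natDegree = t := by
  refine le_antisymm fp_natDegree_le (le_natDegree_of_ne_zero ?_)
  rw [fp_coeff]; simp [hm]

lemma fp_degree (hm : b t = 1) : (fp t b).degree = t := by
  rw [degree_eq_natDegree (fp_monic hm).ne_zero, fp_natDegree hm]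

lemma fp_eval_zero : eval 0 (fp t b) = b 0 := by
  rw [← coeff_zero_eq_eval_zero, fp_coeff]; simp

/-- the functional: coefficient `t-1` of the canonical representative -/
def lam (hm : b t = 1) : AdjoinRoot (fp t b) →ₗ[F] F :=
  (lcoeff F (t-1)).comp (AdjoinRoot.modByMonicHom (fp_monic hm))

lemma lam_mk (hm : b t = 1) (p : F[X]) :
    lam hm (AdjoinRoot.mk _ p) = (p %ₘ fp t b).coeff (t-1) := by
  simp [lam, AdjoinRoot.modByMonicHom_mk]

lemma lam_mk_of_degree_lt (hm : b t = 1) (p : F[X]) (hp : p.degree < (t : WithBot ℕ)) :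
    lam hm (AdjoinRoot.mk _ p) = p.coeff (t-1) := by
  rw [lam_mk, (modByMonic_eq_self_iff (fp_monic hm)).mpr]
  rw [fp_degree hm]; exact hp

/-- faithfulness of the pairing (y, r) ↦ lam (y * r) -/
lemma lam_faithful (ht : 1 ≤ t) (hm : b t = 1) (r : AdjoinRoot (fp t b))
    (h : ∀ y, lam hm (y * r) = 0) : r = 0 := by
  by_contra hr
  obtain ⟨p, rfl⟩ := AdjoinRoot.mk_surjective r
  set ρ : F[X] := p %ₘ fp t b with hρ
  have hmkρ : AdjoinRoot.mk (fp t b) ρ = AdjoinRoot.mk (fp t b) p := by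
    have := AdjoinRoot.mk_leftInverse (fp_monic hm) (AdjoinRoot.mk (fp t b) p)
    rwa [AdjoinRoot.modByMonicHom_mk] at this
  have hρne : ρ ≠ 0 := by
    intro h0
    rw [h0, map_zero] at hmkρ
    exact hr hmkρ.symm
  have hρdeg : ρ.degree < (t : WithBot ℕ) := by
    rw [← fp_degree hm]
    exact degree_modByMonic_lt p (fp_monic hm)
  have hd : ρ.natDegree ≤ t - 1 := by
    have := (natDegree_lt_iff_degree_lt hρne).mpr hρdeg
    omega
  set k := t - 1 - ρ.natDegree with hk
  have key := h (AdjoinRoot.mk _ (X ^ k))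
  rw [← hmkρ, ← map_mul, lam_mk_of_degree_lt hm] at key
  · rw [show t - 1 = ρ.natDegree + k by omega, coeff_X_pow_mul] at key
    exact hρne (leadingCoeff_eq_zero.mp key)
  · rw [degree_mul, degree_X_pow, degree_eq_natDegree hρne, ← Nat.cast_add, Nat.cast_lt]
    omega


/-! ### units -/

lemma isUnit_mk_X_sub_C {β : F} (hβ : eval β (fp t b) ≠ 0) :
    IsUnit (AdjoinRoot.mk (fp t b) (X - C β)) := by
  have hndvd : ¬ (X - C β ∣ fp t b) := fun hdvd => hβ ((dvd_iff_isRoot).mp hdvd)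
  obtain ⟨u, v, huv⟩ := (irreducible_X_sub_C β).coprime_iff_not_dvd.mpr hndvd
  refine IsUnit.of_mul_eq_one (AdjoinRoot.mk _ u) ?_
  have := congrArg (AdjoinRoot.mk (fp t b)) huv
  simp only [map_add, map_mul, AdjoinRoot.mk_self, mul_zero, map_one, add_zero] at this
  rw [mul_comm] at this
  simpa using this

def unitXsubC {β : F} (hβ : eval β (fp t b) ≠ 0) : (AdjoinRoot (fp t b))ˣ :=
  (isUnit_mk_X_sub_C hβ).unit

@[simp] lemma unitXsubC_val {β : F} (hβ : eval β (fp t b) ≠ 0) :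
    (unitXsubC hβ : AdjoinRoot (fp t b)) = AdjoinRoot.mk (fp t b) (X - C β) :=
  IsUnit.unit_spec _

lemma isUnit_root (hb0 : b 0 ≠ 0) : IsUnit (AdjoinRoot.root (fp t b)) := by
  have h0 : eval (0 : F) (fp t b) ≠ 0 := by rw [fp_eval_zero]; exact hb0
  have := isUnit_mk_X_sub_C h0
  simpa using this

def xu (t : ℕ) (hb0 : b 0 ≠ 0) : (AdjoinRoot (fp t b))ˣ := (isUnit_root hb0).unit

@[simp] lemma xu_val (t : ℕ) (hb0 : b 0 ≠ 0) :
    (xu t hb0 : AdjoinRoot (fp t b)) = AdjoinRoot.root (fp t b) :=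
  IsUnit.unit_spec _

/-! ### G and sequences -/

variable (t b) in
def Gset : Set (ℤ → F) :=
  {s : ℤ → F | ∀ n : ℤ, ∑ i ∈ Finset.range (t + 1), b i * s (n + i) = 0}

lemma Gset_sub {s₁ s₂ : ℤ → F} (h₁ : s₁ ∈ Gset t b) (h₂ : s₂ ∈ Gset t b) :
    s₁ - s₂ ∈ Gset t b := by
  intro n
  simp only [Pi.sub_apply, mul_sub, Finset.sum_sub_distrib, h₁ n, h₂ n, sub_zero]

lemma Gset_geom {β : F} (hβ : ∑ i ∈ Finset.range (t + 1), b i * β ^ i ≠ 0)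
    {w : ℤ → F} (hw : w ∈ Gset t b) (hgeo : ∀ n : ℤ, w (n + 1) = β * w n) : w = 0 := by
  have hpow : ∀ i : ℕ, ∀ n : ℤ, w (n + i) = β ^ i * w n := by
    intro i
    induction i with
    | zero => intro n; simp
    | succ i ih =>
      intro n
      have : (n : ℤ) + (i + 1 : ℕ) = (n + i) + 1 := by push_cast; ring
      rw [this, hgeo, ih, pow_succ]
      ring
  funext n
  have := hw n
  simp only [hpow _ n] at this
  have h2 : (∑ i ∈ Finset.range (t + 1), b i * β ^ i) * w n = 0 := by
    rw [Finset.sum_mul]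
    simpa only [mul_assoc] using this
  rcases mul_eq_zero.mp h2 with h | h
  · exact absurd h hβ
  · simpa using h

lemma mk_fp_eq_zero (hm : b t = 1) :
    ∑ i ∈ Finset.range (t + 1), b i • (AdjoinRoot.root (fp t b)) ^ i = 0 := by
  have : AdjoinRoot.mk (fp t b) (fp t b) = 0 := AdjoinRoot.mk_self
  replace this : AdjoinRoot.mk (fp t b) (∑ i ∈ Finset.range (t+1), C (b i) * X ^ i) = 0 := this
  rw [map_sum] at this
  simpa [Algebra.smul_def] using this

/-- the sequence attached to `r` -/
def seq (hb0 : b 0 ≠ 0) (hm : b t = 1) (r : AdjoinRoot (fp t b)) : ℤ → F :=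
  fun n => lam hm ((((xu t hb0) ^ n : (AdjoinRoot (fp t b))ˣ) : AdjoinRoot (fp t b)) * r)

lemma seq_mem_Gset (hb0 : b 0 ≠ 0) (hm : b t = 1) (r : AdjoinRoot (fp t b)) :
    seq hb0 hm r ∈ Gset t b := by
  intro n
  have key : ∀ i : ℕ, (((xu t hb0) ^ (n + (i : ℤ)) : (AdjoinRoot (fp t b))ˣ) : AdjoinRoot (fp t b))
      = (((xu t hb0) ^ n : (AdjoinRoot (fp t b))ˣ) : AdjoinRoot (fp t b)) *
        (AdjoinRoot.root (fp t b)) ^ i := by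
    intro i
    rw [zpow_add, Units.val_mul, zpow_natCast, Units.val_pow_eq_pow_val, xu_val]
  calc ∑ i ∈ Finset.range (t + 1), b i * seq hb0 hm r (n + i)
      = lam hm (∑ i ∈ Finset.range (t + 1),
          b i • ((((xu t hb0) ^ n : (AdjoinRoot (fp t b))ˣ) : AdjoinRoot (fp t b)) *
            (AdjoinRoot.root (fp t b)) ^ i * r)) := by
        rw [map_sum]
        congr 1
        funext i
        rw [map_smul, smul_eq_mul]
        congr 1
        unfold seq
        rw [key i]
    _ = lam hm ((((xu t hb0) ^ n : (AdjoinRoot (fp t b))ˣ) : AdjoinRoot (fp t b)) * r *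
          (∑ i ∈ Finset.range (t + 1), b i • (AdjoinRoot.root (fp t b)) ^ i)) := by
        congr 1
        rw [Finset.mul_sum]
        congr 1
        funext i
        rw [mul_smul_comm]
        congr 1
        ring
    _ = 0 := by rw [mk_fp_eq_zero hm, mul_zero, map_zero]


lemma seq_sub (hb0 : b 0 ≠ 0) (hm : b t = 1) (r r' : AdjoinRoot (fp t b)) :
    seq hb0 hm (r - r') = seq hb0 hm r - seq hb0 hm r' := by
  funext n
  simp only [seq, Pi.sub_apply, mul_sub, map_sub]

lemma seq_natCast (hb0 : b 0 ≠ 0) (hm : b t = 1) (r : AdjoinRoot (fp t b)) (k : ℕ) :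
    seq hb0 hm r (k : ℤ) = lam hm ((AdjoinRoot.root (fp t b)) ^ k * r) := by
  unfold seq
  rw [zpow_natCast, Units.val_pow_eq_pow_val, xu_val]

lemma lam_root_pow_faithful (ht : 1 ≤ t) (hb0 : b 0 ≠ 0) (hm : b t = 1)
    (r : AdjoinRoot (fp t b)) (h : ∀ k : ℕ, lam hm ((AdjoinRoot.root (fp t b)) ^ k * r) = 0) :
    r = 0 := by
  have hfne : fp t b ≠ 0 := (fp_monic hm).ne_zero
  set pb := AdjoinRoot.powerBasis' (fp_monic hm) with hpb
  refine lam_faithful ht hm r (fun y => ?_)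
  have hφ : ((lam hm).comp (LinearMap.mulRight F r)) = 0 := by
    refine pb.basis.ext (fun i => ?_)
    have := pb.basis_eq_pow i
    rw [this]
    simp only [LinearMap.comp_apply, LinearMap.mulRight_apply, LinearMap.zero_apply]
    rw [AdjoinRoot.powerBasis'_gen]
    exact h i
  have := congrFun (congrArg (fun f => f.toFun) hφ) y
  simpa using this

lemma seq_injective (ht : 1 ≤ t) (hb0 : b 0 ≠ 0) (hm : b t = 1) :
    Function.Injective (seq hb0 hm) := by
  intro r r' hrr
  have h0 : seq hb0 hm (r - r') = 0 := by rw [seq_sub, hrr, sub_self]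
  have : r - r' = 0 := by
    refine lam_root_pow_faithful ht hb0 hm _ (fun k => ?_)
    rw [← seq_natCast hb0 hm]
    rw [h0]
    rfl
  exact sub_eq_zero.mp this

lemma window_zero (ht : 1 ≤ t) (hm : b t = 1) (hb0 : b 0 ≠ 0) {s : ℤ → F}
    (hs : s ∈ Gset t b) (h0 : ∀ i : ℕ, i < t → s i = 0) : s = 0 := by
  have up : ∀ n : ℕ, ∀ i : ℕ, i < t → s ((n : ℤ) + i) = 0 := by
    intro n
    induction n with
    | zero => intro i hi; simpa using h0 i hi
    | succ n ih =>
      intro i hi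
      by_cases h : i + 1 < t
      · have := ih (i + 1) h
        rw [show (((n + 1 : ℕ) : ℤ)) + (i : ℤ) = (n : ℤ) + ((i + 1 : ℕ) : ℤ) by push_cast; ring]
        exact this
      · have hit : i = t - 1 := by omega
        have hrec := hs (n : ℤ)
        rw [Finset.sum_range_succ] at hrec
        have hzero : ∑ j ∈ Finset.range t, b j * s ((n : ℤ) + j) = 0 :=
          Finset.sum_eq_zero (fun j hj => by
            rw [ih j (Finset.mem_range.mp hj), mul_zero])
        rw [hzero, zero_add, hm, one_mul] at hrec
        rw [show (((n + 1 : ℕ) : ℤ)) + (i : ℤ) = (n : ℤ) + ((t : ℕ) : ℤ) by push_cast; omega]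
        exact hrec
  have down : ∀ n : ℕ, ∀ i : ℕ, i < t → s (-(n : ℤ) + i) = 0 := by
    intro n
    induction n with
    | zero => intro i hi; simpa using h0 i hi
    | succ n ih =>
      intro i hi
      by_cases h : 1 ≤ i
      · rw [show (-((n + 1 : ℕ) : ℤ)) + (i : ℤ) = -(n : ℤ) + ((i - 1 : ℕ) : ℤ) by push_cast; omega]
        exact ih (i - 1) (by omega)
      · have hi0 : i = 0 := by omega
        subst hi0
        have hrec := hs (-(n : ℤ) - 1)
        rw [Finset.sum_range_succ'] at hrec
        rw [Finset.sum_eq_zero, zero_add] at hrec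
        · have hsz := (mul_eq_zero.mp hrec).resolve_left hb0
          rw [show (-((n + 1 : ℕ) : ℤ)) + ((0 : ℕ) : ℤ) = -(n : ℤ) - 1 + ((0 : ℕ) : ℤ) by
            push_cast; ring]
          exact hsz
        · intro j hj
          have hj' := Finset.mem_range.mp hj
          have heq : (-(n : ℤ) - 1 + ((j + 1 : ℕ) : ℤ)) = -(n : ℤ) + ((j : ℕ) : ℤ) := by
            push_cast; ring
          rw [heq, ih j hj', mul_zero]
  funext n
  rcases le_or_gt 0 n with h | h
  · have := up n.toNat 0 (by omega)
    simpa [Int.toNat_of_nonneg h] using this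
  · have := down (-n).toNat 0 (by omega)
    have hn : (-(((-n).toNat : ℤ)) : ℤ) + (0 : ℕ) = n := by
      simp [Int.toNat_of_nonneg (by omega : 0 ≤ -n)]
    rwa [hn] at this

lemma unitXsubC_val' {β : F} (hβ : eval β (fp t b) ≠ 0) :
    (unitXsubC hβ : AdjoinRoot (fp t b)) =
      AdjoinRoot.root (fp t b) - algebraMap F (AdjoinRoot (fp t b)) β := by
  rw [unitXsubC_val, map_sub, AdjoinRoot.mk_X, AdjoinRoot.mk_C, AdjoinRoot.algebraMap_eq]

lemma seq_Tstep (hb0 : b 0 ≠ 0) (hm : b t = 1) {β : F} (hβ : eval β (fp t b) ≠ 0)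
    (r : AdjoinRoot (fp t b)) (n : ℤ) :
    seq hb0 hm (((unitXsubC hβ)⁻¹ : (AdjoinRoot (fp t b))ˣ) * r) (n + 1)
      - β * seq hb0 hm (((unitXsubC hβ)⁻¹ : (AdjoinRoot (fp t b))ˣ) * r) n
      = seq hb0 hm r n := by
  unfold seq
  rw [show β * lam hm ((((xu t hb0) ^ n : (AdjoinRoot (fp t b))ˣ) : AdjoinRoot (fp t b)) *
      (((unitXsubC hβ)⁻¹ : (AdjoinRoot (fp t b))ˣ) * r)) = lam hm (β • ((((xu t hb0) ^ n :
      (AdjoinRoot (fp t b))ˣ) : AdjoinRoot (fp t b)) *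
      (((unitXsubC hβ)⁻¹ : (AdjoinRoot (fp t b))ˣ) * r))) from by rw [← smul_eq_mul, ← map_smul]]
  rw [← map_sub]
  congr 1
  have hcancel : ((unitXsubC hβ : AdjoinRoot (fp t b))) *
      (((unitXsubC hβ)⁻¹ : (AdjoinRoot (fp t b))ˣ) * r) = r := by
    rw [← mul_assoc]
    norm_cast
    simp
  rw [zpow_add_one, Units.val_mul, xu_val, Algebra.smul_def]
  calc (((xu t hb0) ^ n : (AdjoinRoot (fp t b))ˣ) : AdjoinRoot (fp t b)) *
        AdjoinRoot.root (fp t b) * (((unitXsubC hβ)⁻¹ : (AdjoinRoot (fp t b))ˣ) * r)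
        - algebraMap F _ β * ((((xu t hb0) ^ n : (AdjoinRoot (fp t b))ˣ) : AdjoinRoot (fp t b)) *
          (((unitXsubC hβ)⁻¹ : (AdjoinRoot (fp t b))ˣ) * r))
      = (((xu t hb0) ^ n : (AdjoinRoot (fp t b))ˣ) : AdjoinRoot (fp t b)) *
        ((AdjoinRoot.root (fp t b) - algebraMap F _ β) *
          (((unitXsubC hβ)⁻¹ : (AdjoinRoot (fp t b))ˣ) * r)) := by ring
    _ = (((xu t hb0) ^ n : (AdjoinRoot (fp t b))ˣ) : AdjoinRoot (fp t b)) * r := by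
        rw [← unitXsubC_val' hβ, hcancel]


/-! ### linear independence -/

lemma pow_inv_mul_pow {M : Type*} [Group M] (u : M) {k l : ℕ} (h : k ≤ l) :
    u⁻¹ ^ k * u ^ l = u ^ (l - k) := by
  have h1 : u⁻¹ ^ k = u ^ (-(k : ℤ)) := by rw [zpow_neg, zpow_natCast, inv_pow]
  have h2 : u ^ l = u ^ ((l : ℤ)) := (zpow_natCast u l).symm
  have h3 : u ^ (l - k) = u ^ (((l : ℤ) - (k : ℤ))) := by
    rw [← zpow_natCast]
    congr 1
    omega
  rw [h1, h2, h3, ← zpow_add]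
  congr 1
  ring

lemma wb_add_lt {d : WithBot ℕ} {a m : ℕ} (h : d < (a : WithBot ℕ)) :
    d + (m : WithBot ℕ) < ((a + m : ℕ) : WithBot ℕ) := by
  have h2 : ((a : WithBot ℕ) + (m : WithBot ℕ)) = ((a + m : ℕ) : WithBot ℕ) := by push_cast; ring
  rw [← h2]
  exact WithBot.add_lt_add_right (by simp) h

lemma degree_X_sub_C_pow' (β : F) (k : ℕ) :
    ((X - C β) ^ k : F[X]).degree = (k : WithBot ℕ) := by
  rw [degree_eq_natDegree (pow_ne_zero _ (X_sub_C_ne_zero β)), natDegree_pow, natDegree_X_sub_C,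
    mul_one]

lemma degree_Rsum_lt (n : ℕ) (c : Fin n → F) (β : F) (e : Fin n → ℕ) (he : ∀ j, e j < n) :
    (∑ j : Fin n, C (c j) * (X - C β) ^ (e j)).degree < (n : WithBot ℕ) := by
  refine lt_of_le_of_lt (degree_sum_le _ _) ?_
  refine (Finset.sup_lt_iff (by exact WithBot.bot_lt_coe n)).mpr ?_
  intro j _
  refine lt_of_le_of_lt (degree_mul_le _ _) ?_
  calc (C (c j)).degree + ((X - C β) ^ (e j)).degree
      ≤ 0 + ((e j : ℕ) : WithBot ℕ) := add_le_add degree_C_le (le_of_eq (degree_X_sub_C_pow' β _))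
    _ = ((e j : ℕ) : WithBot ℕ) := zero_add _
    _ < (n : WithBot ℕ) := by rw [Nat.cast_lt]; exact he j

section Indep

variable {S : Type*} [Fintype S] {βv : S → F}

lemma indep (hm : b t = 1) (hinj : Function.Injective βv)
    (hev : ∀ σ : S, eval (βv σ) (fp t b) ≠ 0)
    (ℓ0 : ℕ) (ℓ : S → ℕ) (hsum : ℓ0 + ∑ σ, ℓ σ = t) :
    LinearIndependent F
      (Sum.elim (fun j : Fin ℓ0 => (AdjoinRoot.root (fp t b)) ^ (j : ℕ))
        (fun p : Σ σ : S, Fin (ℓ σ) =>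
          ((((unitXsubC (hev p.1))⁻¹ ^ ((p.2 : ℕ) + 1) : (AdjoinRoot (fp t b))ˣ)) :
            AdjoinRoot (fp t b)))) := by
  classical
  rw [Fintype.linearIndependent_iff]
  intro g hg
  set u : S → (AdjoinRoot (fp t b))ˣ := fun σ => unitXsubC (hev σ) with hu
  set Pu : (AdjoinRoot (fp t b))ˣ := ∏ σ, u σ ^ ℓ σ with hPu
  set A : F[X] := ∑ j : Fin ℓ0, C (g (Sum.inl j)) * X ^ (j : ℕ) with hA
  set Rp : S → F[X] := fun σ =>
    ∑ j : Fin (ℓ σ), C (g (Sum.inr ⟨σ, j⟩)) * (X - C (βv σ)) ^ (ℓ σ - 1 - (j : ℕ)) with hRp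
  set Pp : F[X] := ∏ σ, (X - C (βv σ)) ^ (ℓ σ) with hPp
  set Ppx : S → F[X] := fun σ => ∏ σ' ∈ Finset.univ.erase σ, (X - C (βv σ')) ^ (ℓ σ') with hPpx
  set Q : F[X] := A * Pp + ∑ σ, Rp σ * Ppx σ with hQ
  have hval : ∀ σ : S, ((u σ : (AdjoinRoot (fp t b))ˣ) : AdjoinRoot (fp t b))
      = AdjoinRoot.mk (fp t b) (X - C (βv σ)) := by
    intro σ
    rw [hu]
    exact unitXsubC_val _
  have hvalpow : ∀ (σ : S) (k : ℕ), ((u σ ^ k : (AdjoinRoot (fp t b))ˣ) : AdjoinRoot (fp t b))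
      = AdjoinRoot.mk (fp t b) ((X - C (βv σ)) ^ k) := by
    intro σ k
    rw [Units.val_pow_eq_pow_val, hval, map_pow]
  -- the image of `Pp` is the unit `Pu`
  have hmkPp : AdjoinRoot.mk (fp t b) Pp = (Pu : AdjoinRoot (fp t b)) := by
    rw [hPp, map_prod, hPu, ← Units.coeHom_apply, map_prod]
    refine (Finset.prod_congr rfl (fun σ _ => ?_)).symm
    rw [Units.coeHom_apply]
    exact hvalpow σ (ℓ σ)
  have hmkPpx : ∀ σ : S, AdjoinRoot.mk (fp t b) (Ppx σ)
      = ((∏ σ' ∈ Finset.univ.erase σ, u σ' ^ ℓ σ' : (AdjoinRoot (fp t b))ˣ) :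
          AdjoinRoot (fp t b)) := by
    intro σ
    rw [hPpx, map_prod, ← Units.coeHom_apply, map_prod]
    refine (Finset.prod_congr rfl (fun σ' _ => ?_)).symm
    rw [Units.coeHom_apply]
    exact hvalpow σ' (ℓ σ')
  -- mk Q = (∑ g • e) * Pu = 0
  have hmkQ : AdjoinRoot.mk (fp t b) Q = 0 := by
    have expand : AdjoinRoot.mk (fp t b) Q =
        (∑ i, g i • (Sum.elim (fun j : Fin ℓ0 => (AdjoinRoot.root (fp t b)) ^ (j : ℕ))
          (fun p : Σ σ : S, Fin (ℓ σ) =>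
            ((((unitXsubC (hev p.1))⁻¹ ^ ((p.2 : ℕ) + 1) : (AdjoinRoot (fp t b))ˣ)) :
              AdjoinRoot (fp t b))) i)) * (Pu : AdjoinRoot (fp t b)) := by
      rw [Finset.sum_mul, Fintype.sum_sum_type]
      rw [hQ, map_add, map_mul, map_sum, hmkPp]
      congr 1
      · -- A * Pp part
        rw [Finset.sum_mul]
        refine Finset.sum_congr rfl (fun j _ => ?_)
        simp only [Sum.elim_inl]
        rw [map_mul, map_pow, AdjoinRoot.mk_X, AdjoinRoot.mk_C, ← AdjoinRoot.algebraMap_eq,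
          ← Algebra.smul_def, smul_mul_assoc]
      · -- sigma part
        rw [map_sum, ← Finset.univ_sigma_univ, Finset.sum_sigma]
        refine Finset.sum_congr rfl (fun σ _ => ?_)
        rw [map_mul, hmkPpx σ]
        simp only [hRp]
        rw [map_sum, Finset.sum_mul]
        refine Finset.sum_congr rfl (fun j _ => ?_)
        simp only [Sum.elim_inr]
        rw [map_mul, AdjoinRoot.mk_C, ← AdjoinRoot.algebraMap_eq, ← Algebra.smul_def,
          smul_mul_assoc, smul_mul_assoc]
        congr 1
        have hfact : Pu = u σ ^ ℓ σ * ∏ σ' ∈ Finset.univ.erase σ, u σ' ^ ℓ σ' := by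
          rw [hPu]
          exact (Finset.mul_prod_erase _ _ (Finset.mem_univ σ)).symm
        have hexp : (u σ)⁻¹ ^ ((j : ℕ) + 1) * u σ ^ ℓ σ = u σ ^ (ℓ σ - 1 - (j : ℕ)) := by
          have hle : (j : ℕ) + 1 ≤ ℓ σ := j.2
          rw [pow_inv_mul_pow (u σ) hle]
          congr 1
          omega
        calc AdjoinRoot.mk (fp t b) ((X - C (βv σ)) ^ (ℓ σ - 1 - (j : ℕ))) *
              ((∏ σ' ∈ Finset.univ.erase σ, u σ' ^ ℓ σ' : (AdjoinRoot (fp t b))ˣ) :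
                AdjoinRoot (fp t b))
            = ((u σ ^ (ℓ σ - 1 - (j : ℕ)) * ∏ σ' ∈ Finset.univ.erase σ, u σ' ^ ℓ σ' :
                (AdjoinRoot (fp t b))ˣ) : AdjoinRoot (fp t b)) := by
              rw [Units.val_mul, hvalpow]
          _ = ((((u σ)⁻¹ ^ ((j : ℕ) + 1) * Pu : (AdjoinRoot (fp t b))ˣ)) :
                AdjoinRoot (fp t b)) := by
              rw [hfact, ← mul_assoc, hexp]
          _ = (((unitXsubC (hev σ))⁻¹ ^ ((j : ℕ) + 1) : (AdjoinRoot (fp t b))ˣ) :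
                AdjoinRoot (fp t b)) * (Pu : AdjoinRoot (fp t b)) := by
              rw [Units.val_mul, hu]
    rw [expand, hg, zero_mul]
  have hdvd : fp t b ∣ Q := AdjoinRoot.mk_eq_zero.mp hmkQ
  -- degree bound
  have hPpmonic : Pp.Monic := monic_prod_of_monic _ _ (fun σ _ => (monic_X_sub_C (βv σ)).pow _)
  have hPpxmonic : ∀ σ, (Ppx σ).Monic :=
    fun σ => monic_prod_of_monic _ _ (fun σ' _ => (monic_X_sub_C (βv σ')).pow _)
  have hPpdeg : Pp.degree = ((∑ σ, ℓ σ : ℕ) : WithBot ℕ) := by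
    rw [degree_eq_natDegree hPpmonic.ne_zero, hPp,
      natDegree_prod_of_monic _ _ (fun σ _ => (monic_X_sub_C (βv σ)).pow _)]
    congr 1
    refine Finset.sum_congr rfl (fun σ _ => ?_)
    rw [natDegree_pow, natDegree_X_sub_C, mul_one]
  have hPpxdeg : ∀ σ, (Ppx σ).degree = ((∑ σ' ∈ Finset.univ.erase σ, ℓ σ' : ℕ) : WithBot ℕ) := by
    intro σ
    rw [degree_eq_natDegree (hPpxmonic σ).ne_zero, hPpx,
      natDegree_prod_of_monic _ _ (fun σ' _ => (monic_X_sub_C (βv σ')).pow _)]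
    congr 1
    refine Finset.sum_congr rfl (fun σ' _ => ?_)
    rw [natDegree_pow, natDegree_X_sub_C, mul_one]
  have hQdeg : Q.degree < (t : WithBot ℕ) := by
    rw [hQ]
    refine lt_of_le_of_lt (degree_add_le _ _) (max_lt ?_ ?_)
    · rw [degree_mul, hPpdeg]
      have := wb_add_lt (a := ℓ0) (m := ∑ σ, ℓ σ) (degree_sum_fin_lt (fun j => g (Sum.inl j)))
      rw [hsum] at this
      exact this
    · refine lt_of_le_of_lt (degree_sum_le _ _) ?_
      refine (Finset.sup_lt_iff (by exact WithBot.bot_lt_coe t)).mpr ?_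
      intro σ _
      rw [degree_mul, hPpxdeg σ]
      have hR : (Rp σ).degree < ((ℓ σ : ℕ) : WithBot ℕ) := by
        rw [hRp]
        exact degree_Rsum_lt (ℓ σ) _ (βv σ) _ (fun j => by have := j.2; omega)
      refine lt_of_lt_of_le (wb_add_lt hR) ?_
      rw [Nat.cast_le, Finset.add_sum_erase _ _ (Finset.mem_univ σ)]
      omega
  have hQ0 : Q = 0 := eq_zero_of_dvd_of_degree_lt hdvd (by rwa [fp_degree hm])
  -- all Rp σ = 0
  have hRp0 : ∀ σ, Rp σ = 0 := by
    intro σ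
    rcases Nat.eq_zero_or_pos (ℓ σ) with h0 | hpos
    · rw [hRp]
      exact Finset.sum_eq_zero (fun j _ => by exact absurd j.2 (by omega))
    · have hQ0' := hQ0
      rw [hQ, ← Finset.add_sum_erase _ _ (Finset.mem_univ σ)] at hQ0'
      have hsplit : Rp σ * Ppx σ =
          -(A * Pp) - ∑ σ' ∈ Finset.univ.erase σ, Rp σ' * Ppx σ' := by
        linear_combination hQ0'
      have hdvd1 : (X - C (βv σ)) ^ (ℓ σ) ∣ Rp σ * Ppx σ := by
        rw [hsplit]
        refine dvd_sub (dvd_neg.mpr ?_) (Finset.dvd_sum (fun σ' hσ' => ?_))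
        · exact Dvd.dvd.mul_left (Finset.dvd_prod_of_mem _ (Finset.mem_univ σ)) A
        · refine Dvd.dvd.mul_left ?_ (Rp σ')
          refine Finset.dvd_prod_of_mem _ ?_
          rw [Finset.mem_erase]
          exact ⟨(Finset.mem_erase.mp hσ').1.symm, Finset.mem_univ σ⟩
      have hcop : IsCoprime ((X - C (βv σ)) ^ (ℓ σ)) (Ppx σ) := by
        refine IsCoprime.pow_left ?_
        rw [hPpx]
        refine IsCoprime.prod_right (fun σ' hσ' => IsCoprime.pow_right ?_)
        refine isCoprime_X_sub_C_of_isUnit_sub ?_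
        refine isUnit_iff_ne_zero.mpr (sub_ne_zero.mpr ?_)
        exact fun hEq => (Finset.mem_erase.mp hσ').1 (hinj hEq).symm
      have hdvdR : (X - C (βv σ)) ^ (ℓ σ) ∣ Rp σ := hcop.dvd_of_dvd_mul_right hdvd1
      refine eq_zero_of_dvd_of_degree_lt hdvdR ?_
      rw [degree_X_sub_C_pow', hRp]
      exact degree_Rsum_lt (ℓ σ) _ (βv σ) _ (fun j => by have := j.2; omega)
  -- A = 0
  have hA0 : A = 0 := by
    have hsum0 : ∑ σ, Rp σ * Ppx σ = 0 :=
      Finset.sum_eq_zero (fun σ _ => by rw [hRp0 σ, zero_mul])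
    have : A * Pp = 0 := by
      have := hQ0
      rw [hQ, hsum0, add_zero] at this
      exact this
    exact (mul_eq_zero.mp this).resolve_right hPpmonic.ne_zero
  -- extract coefficients
  rintro (j | ⟨σ, j⟩)
  · have hco : A.coeff (j : ℕ) = g (Sum.inl j) := by
      rw [hA, finset_sum_coeff, Finset.sum_eq_single j]
      · rw [coeff_C_mul, coeff_X_pow, if_pos rfl, mul_one]
      · intro j' _ hne
        rw [coeff_C_mul, coeff_X_pow, if_neg (fun h => hne (Fin.ext h.symm)), mul_zero]
      · intro h
        exact absurd (Finset.mem_univ j) h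
    rw [hA0, coeff_zero] at hco
    exact hco.symm
  · have h1 : (aeval (X + C (βv σ)) (Rp σ) : F[X]) =
        ∑ j' : Fin (ℓ σ), C (g (Sum.inr ⟨σ, j'⟩)) * X ^ (ℓ σ - 1 - (j' : ℕ)) := by
      rw [hRp, map_sum]
      refine Finset.sum_congr rfl (fun j' _ => ?_)
      rw [map_mul, map_pow, map_sub, aeval_X, aeval_C, aeval_C, Polynomial.algebraMap_eq,
        add_sub_cancel_right]
    rw [hRp0 σ, map_zero] at h1
    have hco : (∑ j' : Fin (ℓ σ), C (g (Sum.inr ⟨σ, j'⟩)) * X ^ (ℓ σ - 1 - (j' : ℕ))).coeff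
        (ℓ σ - 1 - (j : ℕ)) = g (Sum.inr ⟨σ, j⟩) := by
      rw [finset_sum_coeff, Finset.sum_eq_single j]
      · rw [coeff_C_mul, coeff_X_pow, if_pos rfl, mul_one]
      · intro j' _ hne
        rw [coeff_C_mul, coeff_X_pow, if_neg, mul_zero]
        have h2 := j.2
        have h3 := j'.2
        intro hEq
        exact hne (Fin.ext (by omega))
      · intro h
        exact absurd (Finset.mem_univ j) h
    rw [← h1, coeff_zero] at hco
    exact hco.symm


lemma finrank_adjoinRoot (hm : b t = 1) :
    Module.finrank F (AdjoinRoot (fp t b)) = t := by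
  rw [(AdjoinRoot.powerBasis' (fp_monic hm)).finrank, AdjoinRoot.powerBasis'_dim,
    fp_natDegree hm]

lemma pairing_faithful (ht : 1 ≤ t) (hm : b t = 1) (hinj : Function.Injective βv)
    (hev : ∀ σ : S, eval (βv σ) (fp t b) ≠ 0)
    (ℓ0 : ℕ) (ℓ : S → ℕ) (hsum : ℓ0 + ∑ σ, ℓ σ = t)
    (r : AdjoinRoot (fp t b))
    (h0 : ∀ j : Fin ℓ0, lam hm ((AdjoinRoot.root (fp t b)) ^ (j : ℕ) * r) = 0)
    (h1 : ∀ (σ : S) (j : Fin (ℓ σ)),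
      lam hm ((((unitXsubC (hev σ))⁻¹ ^ ((j : ℕ) + 1) : (AdjoinRoot (fp t b))ˣ) :
        AdjoinRoot (fp t b)) * r) = 0) : r = 0 := by
  classical
  have hli := indep hm hinj hev ℓ0 ℓ hsum
  have hcard : Fintype.card (Fin ℓ0 ⊕ Σ σ : S, Fin (ℓ σ)) =
      Module.finrank F (AdjoinRoot (fp t b)) := by
    rw [Fintype.card_sum, Fintype.card_fin, Fintype.card_sigma, finrank_adjoinRoot hm]
    simp only [Fintype.card_fin]
    exact hsum
  haveI hne : Nonempty (Fin ℓ0 ⊕ Σ σ : S, Fin (ℓ σ)) := by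
    rw [← Fintype.card_pos_iff, hcard, finrank_adjoinRoot hm]
    omega
  set bas := basisOfLinearIndependentOfCardEqFinrank hli hcard with hbasdef
  have hbas : ⇑bas = Sum.elim (fun j : Fin ℓ0 => (AdjoinRoot.root (fp t b)) ^ (j : ℕ))
      (fun p : Σ σ : S, Fin (ℓ σ) =>
        ((((unitXsubC (hev p.1))⁻¹ ^ ((p.2 : ℕ) + 1) : (AdjoinRoot (fp t b))ˣ)) :
          AdjoinRoot (fp t b))) := coe_basisOfLinearIndependentOfCardEqFinrank _ _
  have hφ : ((lam hm).comp (LinearMap.mulRight F r)) = 0 := by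
    refine bas.ext (fun i => ?_)
    have hbi := congrFun hbas i
    rw [hbi]
    rcases i with j | ⟨σ, j⟩
    · simpa using h0 j
    · simpa using h1 σ j
  refine lam_faithful ht hm r (fun y => ?_)
  have := LinearMap.congr_fun hφ y
  simpa using this

end Indep

end Stmt13Aux

end

open Stmt13Aux Polynomial

open Classical in
theorem stmt13 {F : Type*} [Field F] [Fintype F]
    (t : ℕ) (ht : 2 ≤ t) (b : ℕ → F) (hmonic : b t = 1) (hb0 : b 0 ≠ 0)
    (G : Set (ℤ → F))
    (hG : G = {s : ℤ → F | ∀ n : ℤ, ∑ i ∈ Finset.range (t + 1), b i * s (n + i) = 0})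
    (T : {β : F // ∑ i ∈ Finset.range (t + 1), b i * β ^ i ≠ 0} → (ℤ → F) → (ℤ → F))
    (hT : ∀ β, ∀ s ∈ G, T β s ∈ G ∧
        ∀ n : ℤ, (T β s) (n + 1) - (β : F) * (T β s) n = s n) :
    ∀ ℓ : Option {β : F // ∑ i ∈ Finset.range (t + 1), b i * β ^ i ≠ 0} → ℕ,
      (∀ bl, ℓ bl ≤ t) → (∑ bl, ℓ bl = t) →
      ∀ v : Option {β : F // ∑ i ∈ Finset.range (t + 1), b i * β ^ i ≠ 0} → ℕ → F,
      ∃! s : {u : ℤ → F // u ∈ G},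
        ∀ bl, ∀ j : ℕ, j < ℓ bl →
          (match bl with
            | none => s.val j
            | some β => (T β)^[j + 1] s.val 0) = v bl j := by
  classical
  intro ℓ hℓle hℓsum v
  have ht1 : 1 ≤ t := by omega
  have hGeq : G = Gset t b := by rw [hG]; rfl
  have hev : ∀ σ : {β : F // ∑ i ∈ Finset.range (t + 1), b i * β ^ i ≠ 0},
      eval (σ : F) (fp t b) ≠ 0 := fun σ => by rw [fp_eval]; exact σ.property
  have hinj : Function.Injective
      (fun σ : {β : F // ∑ i ∈ Finset.range (t + 1), b i * β ^ i ≠ 0} => (σ : F)) :=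
    Subtype.val_injective
  have hsum' : ℓ none + ∑ σ, ℓ (some σ) = t := by rw [← Fintype.sum_option]; exact hℓsum
  -- the evaluation map
  set Φ : AdjoinRoot (fp t b) →
      (∀ bl : Option {β : F // ∑ i ∈ Finset.range (t + 1), b i * β ^ i ≠ 0}, Fin (ℓ bl) → F) :=
    fun r bl =>
      match bl with
      | none => fun j => lam hmonic ((AdjoinRoot.root (fp t b)) ^ (j : ℕ) * r)
      | some σ => fun j => lam hmonic
          ((((unitXsubC (hev σ))⁻¹ ^ ((j : ℕ) + 1) : (AdjoinRoot (fp t b))ˣ) :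
            AdjoinRoot (fp t b)) * r)
    with hΦ
  have hΦinj : Function.Injective Φ := by
    intro r r' h
    have hzero : r - r' = 0 := by
      refine pairing_faithful ht1 hmonic hinj hev (ℓ none) (fun σ => ℓ (some σ)) hsum'
        (r - r') (fun j => ?_) (fun σ j => ?_)
      · have := congrFun (congrFun h none) j
        simp only [hΦ] at this
        rw [mul_sub, map_sub, this, sub_self]
      · have := congrFun (congrFun h (some σ)) j
        simp only [hΦ] at this
        rw [mul_sub, map_sub, this, sub_self]
    have := sub_eq_zero.mp hzero
    exact this
  -- cardinalities
  haveI instAR : Fintype (AdjoinRoot (fp t b)) :=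
    Fintype.ofEquiv _ (AdjoinRoot.powerBasis' (fp_monic hmonic)).basis.equivFun.toEquiv.symm
  have cardAR : Fintype.card (AdjoinRoot (fp t b)) = Fintype.card F ^ t := by
    rw [Fintype.card_congr (AdjoinRoot.powerBasis' (fp_monic hmonic)).basis.equivFun.toEquiv]
    rw [Fintype.card_fun, Fintype.card_fin, AdjoinRoot.powerBasis'_dim, fp_natDegree hmonic]
  have cardV : Fintype.card
      (∀ bl : Option {β : F // ∑ i ∈ Finset.range (t + 1), b i * β ^ i ≠ 0}, Fin (ℓ bl) → F)
      = Fintype.card F ^ t := by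
    rw [Fintype.card_pi]
    have : ∀ bl, Fintype.card (Fin (ℓ bl) → F) = Fintype.card F ^ (ℓ bl) := by
      intro bl
      rw [Fintype.card_fun, Fintype.card_fin]
    rw [Finset.prod_congr rfl (fun bl _ => this bl), Finset.prod_pow_eq_pow_sum, hℓsum]
  have hΦbij : Function.Bijective Φ :=
    (Fintype.bijective_iff_injective_and_card Φ).mpr ⟨hΦinj, by rw [cardAR, cardV]⟩
  -- the T-iterate identity
  have hTiter : ∀ (σ : {β : F // ∑ i ∈ Finset.range (t + 1), b i * β ^ i ≠ 0})
      (r' : AdjoinRoot (fp t b)) (k : ℕ),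
      (T σ)^[k] (seq hb0 hmonic r') =
        seq hb0 hmonic ((((unitXsubC (hev σ))⁻¹ ^ k : (AdjoinRoot (fp t b))ˣ) :
          AdjoinRoot (fp t b)) * r') := by
    intro σ r' k
    induction k with
    | zero => simp
    | succ k ih =>
      rw [Function.iterate_succ_apply', ih]
      set rk : AdjoinRoot (fp t b) :=
        (((unitXsubC (hev σ))⁻¹ ^ k : (AdjoinRoot (fp t b))ˣ) : AdjoinRoot (fp t b)) * r'
        with hrk
      have hmem : seq hb0 hmonic rk ∈ G := by rw [hGeq]; exact seq_mem_Gset hb0 hmonic rk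
      obtain ⟨hTmem, hTeq⟩ := hT σ _ hmem
      have hcand := seq_Tstep hb0 hmonic (hev σ) rk
      have hdiff : T σ (seq hb0 hmonic rk) -
          seq hb0 hmonic ((((unitXsubC (hev σ))⁻¹ : (AdjoinRoot (fp t b))ˣ) :
            AdjoinRoot (fp t b)) * rk) = 0 := by
        refine Gset_geom σ.property
          (Gset_sub (hGeq ▸ hTmem) (seq_mem_Gset hb0 hmonic _)) (fun n => ?_)
        have e1 := hTeq n
        have e2 := hcand n
        simp only [Pi.sub_apply]
        linear_combination e1 - e2
      have heq := sub_eq_zero.mp hdiff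
      rw [heq, hrk]
      have harg : (((unitXsubC (hev σ))⁻¹ : (AdjoinRoot (fp t b))ˣ) : AdjoinRoot (fp t b)) *
          ((((unitXsubC (hev σ))⁻¹ ^ k : (AdjoinRoot (fp t b))ˣ) : AdjoinRoot (fp t b)) * r') =
          (((unitXsubC (hev σ))⁻¹ ^ (k + 1) : (AdjoinRoot (fp t b))ˣ) :
            AdjoinRoot (fp t b)) * r' := by
        rw [← mul_assoc, ← Units.val_mul, ← pow_succ']
      rw [harg]
  -- existence
  obtain ⟨r, hr⟩ := hΦbij.surjective (fun bl j => v bl (j : ℕ))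
  have hs0mem : seq hb0 hmonic r ∈ G := by rw [hGeq]; exact seq_mem_Gset hb0 hmonic r
  refine ⟨⟨seq hb0 hmonic r, hs0mem⟩, ?_, ?_⟩
  · intro bl j hj
    cases bl with
    | none =>
      show seq hb0 hmonic r (j : ℤ) = v none j
      rw [seq_natCast]
      have := congrFun (congrFun hr none) ⟨j, hj⟩
      simpa [hΦ] using this
    | some σ =>
      show (T σ)^[j + 1] (seq hb0 hmonic r) 0 = v (some σ) j
      rw [hTiter σ r (j + 1)]
      have h0 : seq hb0 hmonic ((((unitXsubC (hev σ))⁻¹ ^ (j + 1) : (AdjoinRoot (fp t b))ˣ) :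
          AdjoinRoot (fp t b)) * r) (0 : ℤ) =
          lam hmonic ((((unitXsubC (hev σ))⁻¹ ^ (j + 1) : (AdjoinRoot (fp t b))ˣ) :
            AdjoinRoot (fp t b)) * r) := by
        unfold Stmt13Aux.seq
        rw [zpow_zero, Units.val_one, one_mul]
      rw [h0]
      have := congrFun (congrFun hr (some σ)) ⟨j, hj⟩
      simpa [hΦ] using this
  -- uniqueness
  · intro s' hs'
    -- every element of G is a seq
    set W : {u : ℤ → F // u ∈ G} → (Fin t → F) := fun u i => u.val ((i : ℕ) : ℤ) with hW
    have hWinj : Function.Injective W := by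
      intro u1 u2 h12
      apply Subtype.ext
      have hd : u1.val - u2.val = 0 := by
        refine window_zero ht1 hmonic hb0 (Gset_sub (hGeq ▸ u1.2) (hGeq ▸ u2.2))
          (fun i hi => ?_)
        have := congrFun h12 ⟨i, hi⟩
        simp only [hW] at this
        simp only [Pi.sub_apply, this, sub_self]
      exact sub_eq_zero.mp hd
    haveI : Finite {u : ℤ → F // u ∈ G} := Finite.of_injective W hWinj
    haveI fintG : Fintype {u : ℤ → F // u ∈ G} := Fintype.ofFinite _
    set seqG : AdjoinRoot (fp t b) → {u : ℤ → F // u ∈ G} :=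
      fun rr => ⟨seq hb0 hmonic rr, by rw [hGeq]; exact seq_mem_Gset hb0 hmonic rr⟩ with hseqG
    have hseqGinj : Function.Injective seqG := by
      intro r1 r2 h
      exact seq_injective ht1 hb0 hmonic (congrArg Subtype.val h)
    have hcards : Fintype.card {u : ℤ → F // u ∈ G} = Fintype.card (AdjoinRoot (fp t b)) := by
      refine le_antisymm ?_ (Fintype.card_le_of_injective seqG hseqGinj)
      refine le_trans (Fintype.card_le_of_injective W hWinj) ?_
      rw [Fintype.card_fun, Fintype.card_fin, cardAR]
    have hseqGbij : Function.Bijective seqG :=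
      (Fintype.bijective_iff_injective_and_card seqG).mpr ⟨hseqGinj, hcards.symm⟩
    obtain ⟨r'', hr''⟩ := hseqGbij.surjective s'
    have hs'val : s'.val = seq hb0 hmonic r'' := by rw [← hr'']
    have hΦr'' : Φ r'' = (fun bl (j : Fin (ℓ bl)) => v bl (j : ℕ)) := by
      funext bl j
      have hj := j.2
      have hval := hs' bl (j : ℕ) hj
      cases bl with
      | none =>
        have : s'.val ((j : ℕ) : ℤ) = v none (j : ℕ) := hval
        rw [hs'val, seq_natCast] at this
        simpa [hΦ] using this
      | some σ =>
        have hvv : (T σ)^[(j : ℕ) + 1] s'.val 0 = v (some σ) (j : ℕ) := hval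
        rw [hs'val, hTiter σ r'' ((j : ℕ) + 1)] at hvv
        have h0 : seq hb0 hmonic
            ((((unitXsubC (hev σ))⁻¹ ^ ((j : ℕ) + 1) : (AdjoinRoot (fp t b))ˣ) :
              AdjoinRoot (fp t b)) * r'') (0 : ℤ) =
            lam hmonic ((((unitXsubC (hev σ))⁻¹ ^ ((j : ℕ) + 1) : (AdjoinRoot (fp t b))ˣ) :
              AdjoinRoot (fp t b)) * r'') := by
          unfold Stmt13Aux.seq
          rw [zpow_zero, Units.val_one, one_mul]
        rw [h0] at hvv
        simpa [hΦ] using hvv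
    have hrr : r'' = r := hΦbij.injective (hΦr''.trans hr.symm)
    rw [← hr'', hrr]
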